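/- Let T be a tree-decomposition of a graph G, and let A be an independent set of G that is not contained in any bag. Then there exists an edge t₁t₂ of the decomposition tree splitting it into subtrees T₁, T₂ and a partition A = A₁ ∪ A₂ ∪ A₃ with |A₁|, |A₂| ≥ 1, vertices of A₁ appearing only in bags of T₁, vertices of A₂ appearing only in bags of T₂, and vertices of A₃ appearing in bags of both; moreover A₃ ⊆ X_{t₁} ∩ X_{t₂}. -/

import Mathlib

open SimpleGraph

structure TreeDecomp {V : Type} (G : SimpleGraph V) where
  ι : Type
  tree : SimpleGraph ι
  isTree : tree.IsTree
  bag : ι → Finset V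
  covers_edge : ∀ ⦃u v : V⦄, G.Adj u v → ∃ t, u ∈ bag t ∧ v ∈ bag t
  support_connected : ∀ v : V, (tree.induce {t | v ∈ bag t}).Connected

noncomputable def indepNum {V : Type} (G : SimpleGraph V) (s : Set V) : ℕ :=
  sSup {n | ∃ t : Finset V, ↑t ⊆ s ∧ (↑t : Set V).Pairwise (fun a b => ¬ G.Adj a b) ∧ t.card = n}

noncomputable def alpha {V : Type} (G : SimpleGraph V) : ℕ := indepNum G Set.univ

noncomputable def chiNat {V : Type} (G : SimpleGraph V) : ℕ := G.chromaticNumber.toNat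

noncomputable def tw {V : Type} (G : SimpleGraph V) : ℕ :=
  sInf {w | ∃ D : TreeDecomp G, ∀ t, (D.bag t).card ≤ w + 1}

noncomputable def treeAlpha {V : Type} (G : SimpleGraph V) : ℕ :=
  sInf {k | ∃ D : TreeDecomp G, ∀ t, indepNum G ↑(D.bag t) ≤ k}

noncomputable def treeChi {V : Type} (G : SimpleGraph V) : ℕ :=
  sInf {k | ∃ D : TreeDecomp G, ∀ t, chiNat (G.induce ↑(D.bag t)) ≤ k}

noncomputable def treeTw {V : Type} (G : SimpleGraph V) : ℕ :=
  sInf {k | ∃ D : TreeDecomp G, ∀ t, tw (G.induce ↑(D.bag t)) ≤ k}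

noncomputable def omegaNum {V : Type} (G : SimpleGraph V) : ℕ :=
  sSup {n | ∃ t : Finset V, G.IsClique ↑t ∧ t.card = n}

def completion {V : Type} (H : SimpleGraph V) :
    SimpleGraph (V ⊕ {p : Sym2 V // ¬ p.IsDiag ∧ p ∉ H.edgeSet}) :=
  SimpleGraph.fromRel (fun x y =>
    match x, y with
    | .inl u, .inl v => H.Adj u v
    | .inl u, .inr p => u ∈ p.1
    | _, _ => False)

variable {ι : Type} {T : SimpleGraph ι}

lemma walk_delete {x y : ι} (w : T.Walk x y) (e : Sym2 ι) :
    (T.deleteEdges {e}).Reachable x y ∨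
      ∃ a, a ∈ e ∧ (T.deleteEdges {e}).Reachable x a := by
  induction w with
  | nil => exact Or.inl (Reachable.refl _)
  | @cons u v _ h w ih =>
    by_cases he : s(u, v) = e
    · exact Or.inr ⟨u, he ▸ Sym2.mem_mk_left u v, Reachable.refl _⟩
    · have hadj : (T.deleteEdges {e}).Adj u v := by
        rw [deleteEdges_adj]; exact ⟨h, by simpa using he⟩
      rcases ih with h1 | ⟨a, ha, h1⟩
      · exact Or.inl (hadj.reachable.trans h1)
      · exact Or.inr ⟨a, ha, hadj.reachable.trans h1⟩

lemma reach_split (hT : T.Preconnected) (t₁ t₂ t : ι) :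
    (T.deleteEdges {s(t₁,t₂)}).Reachable t t₁ ∨ (T.deleteEdges {s(t₁,t₂)}).Reachable t t₂ := by
  obtain ⟨w⟩ := hT t t₁
  rcases walk_delete w s(t₁,t₂) with h | ⟨a, ha, h⟩
  · exact Or.inl h
  · rw [Sym2.mem_iff] at ha
    rcases ha with rfl | rfl
    · exact Or.inl h
    · exact Or.inr h

lemma induce_walk_reach {S : Set ι} {a b : S} (w : (T.induce S).Walk a b) (t₁ t₂ : ι) :
    (T.deleteEdges {s(t₁,t₂)}).Reachable a b ∨ (t₁ ∈ S ∧ t₂ ∈ S) := by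
  induction w with
  | nil => exact Or.inl (Reachable.refl _)
  | @cons u v _ h w ih =>
    have hadj : T.Adj ↑u ↑v := h
    by_cases he : s((u:ι), (v:ι)) = s(t₁, t₂)
    · rw [Sym2.eq_iff] at he
      rcases he with ⟨h1, h2⟩ | ⟨h1, h2⟩
      · exact Or.inr ⟨h1 ▸ u.2, h2 ▸ v.2⟩
      · exact Or.inr ⟨h2 ▸ v.2, h1 ▸ u.2⟩
    · have hadj' : (T.deleteEdges {s(t₁,t₂)}).Adj ↑u ↑v := by
        rw [deleteEdges_adj]; exact ⟨hadj, by simpa using he⟩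
      rcases ih with h1 | h1
      · exact Or.inl (hadj'.reachable.trans h1)
      · exact Or.inr h1

variable {V : Type} {G : SimpleGraph V}

lemma supp_nonempty (D : TreeDecomp G) (v : V) : ∃ t, v ∈ D.bag t := by
  obtain ⟨⟨t, ht⟩⟩ := (D.support_connected v).nonempty
  exact ⟨t, ht⟩

lemma bridge (D : TreeDecomp G) {t₁ t₂ : D.ι} (hadj : D.tree.Adj t₁ t₂) :
    ¬ (D.tree.deleteEdges {s(t₁,t₂)}).Reachable t₁ t₂ :=
  (isBridge_iff).mp (isAcyclic_iff_forall_adj_isBridge.mp D.isTree.IsAcyclic hadj)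

lemma crossing (D : TreeDecomp G) {t₁ t₂ : D.ι} (hadj : D.tree.Adj t₁ t₂)
    {v : V} {u u' : D.ι} (hu : v ∈ D.bag u) (hu' : v ∈ D.bag u')
    (h1 : (D.tree.deleteEdges {s(t₁,t₂)}).Reachable u t₁)
    (h2 : (D.tree.deleteEdges {s(t₁,t₂)}).Reachable u' t₂) :
    v ∈ D.bag t₁ ∧ v ∈ D.bag t₂ := by
  obtain ⟨w⟩ := (D.support_connected v).preconnected ⟨u, hu⟩ ⟨u', hu'⟩
  rcases induce_walk_reach w t₁ t₂ with h | h
  · exact absurd (h1.symm.trans (h.trans h2)) (bridge D hadj)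
  · exact h

/-- The conclusion of the main theorem. -/
def Concl [DecidableEq V] (D : TreeDecomp G) (A : Finset V) : Prop :=
  ∃ t₁ t₂, D.tree.Adj t₁ t₂ ∧
    ∃ A₁ A₂ A₃ : Finset V, A = A₁ ∪ A₂ ∪ A₃ ∧
      Disjoint A₁ A₂ ∧ Disjoint A₁ A₃ ∧ Disjoint A₂ A₃ ∧
      A₁.Nonempty ∧ A₂.Nonempty ∧
      (∀ v ∈ A₁, ∀ t, v ∈ D.bag t →
        (D.tree.deleteEdges {s(t₁, t₂)}).Reachable t t₁) ∧
      (∀ v ∈ A₂, ∀ t, v ∈ D.bag t →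
        (D.tree.deleteEdges {s(t₁, t₂)}).Reachable t t₂) ∧
      (∀ v ∈ A₃,
        (∃ t, v ∈ D.bag t ∧ (D.tree.deleteEdges {s(t₁, t₂)}).Reachable t t₁) ∧
        (∃ t, v ∈ D.bag t ∧ (D.tree.deleteEdges {s(t₁, t₂)}).Reachable t t₂)) ∧
      (∀ v ∈ A₃, v ∈ D.bag t₁ ∧ v ∈ D.bag t₂)

lemma build [DecidableEq V] (D : TreeDecomp G) (A : Finset V) {t₁ t₂ : D.ι}
    (hadj : D.tree.Adj t₁ t₂) {a b : V} (ha : a ∈ A) (hb : b ∈ A)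
    (hafull : ∀ t, a ∈ D.bag t → (D.tree.deleteEdges {s(t₁,t₂)}).Reachable t t₁)
    (hbfull : ∀ t, b ∈ D.bag t → (D.tree.deleteEdges {s(t₁,t₂)}).Reachable t t₂) :
    Concl D A := by
  classical
  set T' := D.tree.deleteEdges {s(t₁,t₂)} with hT'
  have hbr := bridge D hadj
  have hpre := D.isTree.isConnected.preconnected
  set A₁ := A.filter (fun v => ∀ t, v ∈ D.bag t → T'.Reachable t t₁) with hA₁
  set A₂ := A.filter (fun v => ∀ t, v ∈ D.bag t → T'.Reachable t t₂) with hA₂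
  set A₃ := A \ (A₁ ∪ A₂) with hA₃
  have hsub : A₁ ∪ A₂ ⊆ A :=
    Finset.union_subset (Finset.filter_subset _ _) (Finset.filter_subset _ _)
  have hd12 : Disjoint A₁ A₂ := by
    rw [Finset.disjoint_left]
    intro v hv1 hv2
    rw [hA₁, Finset.mem_filter] at hv1
    rw [hA₂, Finset.mem_filter] at hv2
    obtain ⟨t, ht⟩ := supp_nonempty D v
    exact hbr ((hv1.2 t ht).symm.trans (hv2.2 t ht))
  have hmem3 : ∀ v ∈ A₃, v ∈ A ∧ v ∉ A₁ ∧ v ∉ A₂ := by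
    intro v hv
    rw [hA₃, Finset.mem_sdiff, Finset.mem_union] at hv
    push_neg at hv
    exact ⟨hv.1, hv.2.1, hv.2.2⟩
  have hside3 : ∀ v ∈ A₃,
      (∃ t, v ∈ D.bag t ∧ T'.Reachable t t₁) ∧ (∃ t, v ∈ D.bag t ∧ T'.Reachable t t₂) := by
    intro v hv
    obtain ⟨hvA, hv1, hv2⟩ := hmem3 v hv
    rw [hA₁, Finset.mem_filter] at hv1
    push_neg at hv1
    obtain ⟨t, ht, hnr⟩ := hv1 hvA
    have htr : T'.Reachable t t₂ := (reach_split hpre t₁ t₂ t).resolve_left hnr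
    rw [hA₂, Finset.mem_filter] at hv2
    push_neg at hv2
    obtain ⟨t', ht', hnr'⟩ := hv2 hvA
    have htr' : T'.Reachable t' t₁ := (reach_split hpre t₁ t₂ t').resolve_right hnr'
    exact ⟨⟨t', ht', htr'⟩, ⟨t, ht, htr⟩⟩
  refine ⟨t₁, t₂, hadj, A₁, A₂, A₃, ?_, hd12, ?_, ?_, ⟨a, ?_⟩, ⟨b, ?_⟩, ?_, ?_, hside3, ?_⟩
  · rw [hA₃, Finset.union_sdiff_of_subset hsub]
  · exact Finset.disjoint_sdiff.mono_left Finset.subset_union_left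
  · exact Finset.disjoint_sdiff.mono_left Finset.subset_union_right
  · rw [hA₁, Finset.mem_filter]; exact ⟨ha, hafull⟩
  · rw [hA₂, Finset.mem_filter]; exact ⟨hb, hbfull⟩
  · intro v hv; rw [hA₁, Finset.mem_filter] at hv; exact hv.2
  · intro v hv; rw [hA₂, Finset.mem_filter] at hv; exact hv.2
  · intro v hv
    obtain ⟨⟨t', ht', htr'⟩, ⟨t, ht, htr⟩⟩ := hside3 v hv
    exact crossing D hadj ht' ht htr' htr

lemma descent [DecidableEq V] (D : TreeDecomp G) (A : Finset V) (N : ℕ)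
    (hmax : ∀ u, (A.filter (· ∈ D.bag u)).card ≤ N)
    {a₀ : V} (ha₀ : a₀ ∈ A) {s₀ : D.ι} (hs₀ : a₀ ∈ D.bag s₀)
    {t : D.ι} (p : D.tree.Walk t s₀) (hp : p.IsPath)
    (hN : (A.filter (· ∈ D.bag t)).card = N) (hnt : a₀ ∉ D.bag t) :
    Concl D A := by
  classical
  match p with
  | Walk.nil => exact absurd hs₀ hnt
  | @Walk.cons _ _ t s _ hadj w =>
    rw [Walk.cons_isPath_iff] at hp
    set T' := D.tree.deleteEdges {s(t,s)} with hT'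
    have hbr := bridge D hadj
    have hpre := D.isTree.isConnected.preconnected
    -- the tail avoids the deleted edge
    have hedge : ∀ e ∈ w.edges, e ∉ ({s(t,s)} : Set (Sym2 D.ι)) := by
      intro e he
      simp only [Set.mem_singleton_iff]
      rintro rfl
      exact hp.2 (w.fst_mem_support_of_mem_edges he)
    have hreach_s0 : T'.Reachable s s₀ := ⟨w.toDeleteEdges _ hedge⟩
    -- a₀'s support is entirely on the s-side
    have ha₀side : ∀ u, a₀ ∈ D.bag u → T'.Reachable u s := by
      intro u hu
      rcases reach_split hpre t s u with h | h
      · exact absurd (crossing D hadj hu hs₀ h hreach_s0.symm).1 hnt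
      · exact h
    by_cases hex : ∃ b ∈ A, ∀ u, b ∈ D.bag u → T'.Reachable u t
    · obtain ⟨b, hbA, hbfull⟩ := hex
      exact build D A hadj hbA ha₀ hbfull ha₀side
    · push_neg at hex
      have hsub : A.filter (· ∈ D.bag t) ⊆ A.filter (· ∈ D.bag s) := by
        intro x hx
        rw [Finset.mem_filter] at hx ⊢
        obtain ⟨u, hxu, hnr⟩ := hex x hx.1
        have hur : T'.Reachable u s := (reach_split hpre t s u).resolve_left hnr
        exact ⟨hx.1, (crossing D hadj hx.2 hxu (Reachable.refl t) hur).2⟩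
      have hns : a₀ ∉ D.bag s := by
        intro h
        have h1 : insert a₀ (A.filter (· ∈ D.bag t)) ⊆ A.filter (· ∈ D.bag s) :=
          Finset.insert_subset (Finset.mem_filter.mpr ⟨ha₀, h⟩) hsub
        have h2 : a₀ ∉ A.filter (· ∈ D.bag t) := fun hc => hnt (Finset.mem_filter.mp hc).2
        have := Finset.card_le_card h1
        rw [Finset.card_insert_of_notMem h2, hN] at this
        exact absurd (le_trans this (hmax s)) (by omega)
      have hNs : (A.filter (· ∈ D.bag s)).card = N :=
        le_antisymm (hmax s) (hN ▸ Finset.card_le_card hsub)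
      exact descent D A N hmax ha₀ hs₀ w hp.1 hNs hns
termination_by p.length
decreasing_by simp [Walk.length_cons]

theorem main [DecidableEq V] (D : TreeDecomp G) (A : Finset V)
    (hnb : ¬ ∃ t, A ⊆ D.bag t) : Concl D A := by
  classical
  have hne : Nonempty D.ι := D.isTree.isConnected.nonempty
  set S : Set ℕ := Set.range (fun u => (A.filter (· ∈ D.bag u)).card) with hS
  have hbdd : BddAbove S := by
    refine ⟨A.card, ?_⟩
    rintro n ⟨u, rfl⟩
    exact Finset.card_filter_le _ _
  have hSne : S.Nonempty := Set.range_nonempty _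
  set N := sSup S with hNdef
  obtain ⟨t₀, ht₀⟩ : ∃ t₀, (A.filter (· ∈ D.bag t₀)).card = N := Nat.sSup_mem hSne hbdd
  have hmax : ∀ u, (A.filter (· ∈ D.bag u)).card ≤ N := fun u =>
    le_csSup hbdd ⟨u, rfl⟩
  obtain ⟨a₀, ha₀, hnt₀⟩ : ∃ a ∈ A, a ∉ D.bag t₀ := by
    by_contra h
    push_neg at h
    exact hnb ⟨t₀, h⟩
  obtain ⟨s₀, hs₀⟩ := supp_nonempty D a₀
  obtain ⟨w⟩ := D.isTree.isConnected.preconnected t₀ s₀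
  exact descent D A N hmax ha₀ hs₀ w.toPath.1 w.toPath.2 ht₀ hnt₀


theorem stmt9 {V : Type} [DecidableEq V] (G : SimpleGraph V) (D : TreeDecomp G)
    (A : Finset V) (hA : (↑A : Set V).Pairwise fun a b => ¬ G.Adj a b)
    (hnb : ¬ ∃ t, A ⊆ D.bag t) :
    ∃ t₁ t₂, D.tree.Adj t₁ t₂ ∧
      ∃ A₁ A₂ A₃ : Finset V, A = A₁ ∪ A₂ ∪ A₃ ∧
        Disjoint A₁ A₂ ∧ Disjoint A₁ A₃ ∧ Disjoint A₂ A₃ ∧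
        A₁.Nonempty ∧ A₂.Nonempty ∧
        (∀ v ∈ A₁, ∀ t, v ∈ D.bag t →
          (D.tree.deleteEdges {s(t₁, t₂)}).Reachable t t₁) ∧
        (∀ v ∈ A₂, ∀ t, v ∈ D.bag t →
          (D.tree.deleteEdges {s(t₁, t₂)}).Reachable t t₂) ∧
        (∀ v ∈ A₃,
          (∃ t, v ∈ D.bag t ∧ (D.tree.deleteEdges {s(t₁, t₂)}).Reachable t t₁) ∧
          (∃ t, v ∈ D.bag t ∧ (D.tree.deleteEdges {s(t₁, t₂)}).Reachable t t₂)) ∧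
        (∀ v ∈ A₃, v ∈ D.bag t₁ ∧ v ∈ D.bag t₂) := main D A hnb
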